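/- If d < n ≤ 2d, then P(n+1, d+1) ≥ P(n, d). -/

import Mathlib

/-- The Chebyshev distance between two permutations of `{1,…,n}`
(represented as permutations of `Fin n`): `max_i |σ(i) − τ(i)|`. -/
def permDist {n : ℕ} (σ τ : Equiv.Perm (Fin n)) : ℕ :=
  Finset.univ.sup fun i => Nat.dist (σ i : ℕ) (τ i : ℕ)

/-- `P n d` is the maximum cardinality of a set of permutations of `{1,…,n}`
whose pairwise Chebyshev distance is at least `d`. -/
noncomputable def P (n d : ℕ) : ℕ :=
  sSup {k | ∃ A : Finset (Equiv.Perm (Fin n)),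
    (∀ σ ∈ A, ∀ τ ∈ A, σ ≠ τ → d ≤ permDist σ τ) ∧ A.card = k}

/-- Extend a permutation of `Fin n` to `Fin (n+1)`: the last index maps to `p`,
and index `i` maps to `p.succAbove (σ i)`. -/
def extPerm {n : ℕ} (p : Fin (n + 1)) (σ : Equiv.Perm (Fin n)) : Equiv.Perm (Fin (n + 1)) :=
  (finSuccEquiv' (Fin.last n)).trans ((Equiv.optionCongr σ).trans (finSuccEquiv' p).symm)

lemma extPerm_castSucc {n : ℕ} (p : Fin (n + 1)) (σ : Equiv.Perm (Fin n)) (i : Fin n) :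
    extPerm p σ i.castSucc = p.succAbove (σ i) := by
  simp [extPerm, ← Fin.succAbove_last, finSuccEquiv'_succAbove, finSuccEquiv'_symm_some]

lemma extPerm_injective {n : ℕ} (p : Fin (n + 1)) :
    Function.Injective (extPerm p) := by
  intro σ τ h
  ext i
  have := congrArg (fun e : Equiv.Perm (Fin (n + 1)) => e i.castSucc) h
  simp only [extPerm_castSucc] at this
  exact congrArg Fin.val (Fin.succAbove_right_injective this)

lemma coe_succAbove {n : ℕ} (p : Fin (n + 1)) (j : Fin n) :
    (p.succAbove j : ℕ) = if (j : ℕ) < (p : ℕ) then (j : ℕ) else (j : ℕ) + 1 := by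
  rw [Fin.succAbove]
  split_ifs with h1 h2 h2
  · rfl
  · exact absurd h1 (by simpa [Fin.lt_def] using h2)
  · exact absurd h2 (by simpa [Fin.lt_def] using h1)
  · rfl

theorem stmt16 (n d : ℕ) (hd : d < n) (hn : n ≤ 2 * d) :
    P n d ≤ P (n + 1) (d + 1) := by
  have hd0 : 0 < d := by omega
  set p : Fin (n + 1) := ⟨d, by omega⟩ with hp
  have key : ∀ σ τ : Equiv.Perm (Fin n), d ≤ permDist σ τ →
      d + 1 ≤ permDist (extPerm p σ) (extPerm p τ) := by
    intro σ τ h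
    rw [permDist, Finset.le_sup_iff hd0] at h
    obtain ⟨i, -, hi⟩ := h
    refine Finset.le_sup_of_le (b := i.castSucc) (Finset.mem_univ _) ?_
    rw [extPerm_castSucc, extPerm_castSucc, coe_succAbove, coe_succAbove]
    have ha : (σ i : ℕ) < n := (σ i).isLt
    have hb : (τ i : ℕ) < n := (τ i).isLt
    simp only [Nat.dist, Fin.val_mk] at hi ⊢
    have hpv : (p : ℕ) = d := rfl
    split_ifs <;> omega
  apply csSup_le_csSup
  · refine ⟨Fintype.card (Equiv.Perm (Fin (n + 1))), ?_⟩
    rintro k ⟨A, -, rfl⟩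
    exact Finset.card_le_univ A
  · exact ⟨0, ∅, by simp⟩
  · rintro k ⟨A, hA, rfl⟩
    refine ⟨A.image (extPerm p), ?_, Finset.card_image_of_injective A (extPerm_injective p)⟩
    intro σ' hσ' τ' hτ' hne
    obtain ⟨σ, hσ, rfl⟩ := Finset.mem_image.mp hσ'
    obtain ⟨τ, hτ, rfl⟩ := Finset.mem_image.mp hτ'
    exact key σ τ (hA σ hσ τ hτ (fun h => hne (by rw [h])))
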